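/- arXiv:1212.6789 — 2 statements merged into one kernel-verified Lean document; each statement's English description precedes it below -/
import Mathlib

section
/- Let λ be an n-partition, σ an n-permutation, and T a semistandard tableau of shape λ. Then M(T) = Y_λ(σ) if and only if T(l,k) ∈ G_λ(T,σ;l,k) for every box (l,k) of λ. -/
/-
Common combinatorial set-up for "Tableaux for Key Polynomials, Demazure
Characters, and Atoms" (Proctor–Willis).

Conventions: a box `(j, i)` means column `j`, row `i`, both 1-indexed.
Partial (remnant) tableaux are encoded by their column-length functions
`c : ℕ → ℕ` (each column of a remnant is a top segment of the original
column), together with the ambient value function `T : ℕ → ℕ → ℕ`.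
-/

open scoped BigOperators Classical

noncomputable section

namespace KeyPoly

open MvPolynomial

/-- An `n`-partition `λ = (λ_1, …, λ_n)` with `λ_1 ≥ … ≥ λ_n ≥ 0`,
recorded as a function on `1, …, n`, vanishing beyond `n`. -/
structure NPartition (n : ℕ) where
  part : ℕ → ℕ
  antitone : ∀ ⦃i j : ℕ⦄, 1 ≤ i → i ≤ j → part j ≤ part i
  outside : ∀ i : ℕ, n < i → part i = 0

variable {n : ℕ}

/-- The column length `ζ_j` of the Young diagram of `λ`. -/
def zeta (lam : NPartition n) (j : ℕ) : ℕ :=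
  ((Finset.Icc 1 n).filter fun i => j ≤ lam.part i).card

/-- The box `(j,i)` (column `j`, row `i`) belongs to the diagram of `λ`. -/
def InShape (lam : NPartition n) (j i : ℕ) : Prop :=
  1 ≤ j ∧ 1 ≤ i ∧ i ≤ n ∧ j ≤ lam.part i

/-- The boxes of the diagram of `λ`, as a finite set of pairs (column, row). -/
def boxes (lam : NPartition n) : Finset (ℕ × ℕ) :=
  (Finset.Icc 1 (lam.part 1) ×ˢ Finset.Icc 1 n).filter fun b => b.1 ≤ lam.part b.2

/-- `T` is a semistandard tableau of shape `λ` with values in `[1,n]`: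
rows weakly increase eastward, columns strictly increase southward. -/
def IsSSYT (lam : NPartition n) (T : ℕ → ℕ → ℕ) : Prop :=
  (∀ j i, InShape lam j i → 1 ≤ T j i ∧ T j i ≤ n) ∧
  (∀ j i, InShape lam (j + 1) i → T j i ≤ T (j + 1) i) ∧
  (∀ j i, InShape lam j (i + 1) → T j i < T j (i + 1))

/-- Normalization: the filling vanishes outside the shape. -/
def ZeroOutside (lam : NPartition n) (T : ℕ → ℕ → ℕ) : Prop :=
  ∀ j i, ¬ InShape lam j i → T j i = 0

/-- `T(l, k+1)`, with the boundary convention `n+1` when `k = ζ_l`. -/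
def south (lam : NPartition n) (T : ℕ → ℕ → ℕ) (l k : ℕ) : ℕ :=
  if InShape lam l (k + 1) then T l (k + 1) else n + 1

/-- `T(l+1, k)`, with the boundary convention `n` when `l = λ_k`. -/
def east (lam : NPartition n) (T : ℕ → ℕ → ℕ) (l k : ℕ) : ℕ :=
  if InShape lam (l + 1) k then T (l + 1) k else n

/-- An `n`-permutation: a tuple `(p 1, …, p n)` of distinct entries from `[1,n]`. -/
def IsNPerm (n : ℕ) (p : ℕ → ℕ) : Prop :=
  Set.BijOn p (Set.Icc 1 n) (Set.Icc 1 n)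

/-- The `λ`-key `Y_λ(π)`: column `j` is `π_1, …, π_{ζ_j}` sorted increasingly
(from top to bottom); zero outside the shape. -/
def keyTab (lam : NPartition n) (p : ℕ → ℕ) (j i : ℕ) : ℕ :=
  if InShape lam j i then
    (((Finset.Icc 1 (zeta lam j)).image p).sort (· ≤ ·)).getD (i - 1) 0
  else 0

/-- A semistandard `T` is a key if the values of each column contain the
values of every column to its east. -/
def colSet (lam : NPartition n) (T : ℕ → ℕ → ℕ) (j : ℕ) : Finset ℕ :=
  (Finset.Icc 1 (zeta lam j)).image (T j)

def IsKey (lam : NPartition n) (T : ℕ → ℕ → ℕ) : Prop :=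
  ∀ j j' : ℕ, 1 ≤ j → j ≤ j' → j' ≤ lam.part 1 → colSet lam T j' ⊆ colSet lam T j

/-! ### The (right) scanning method -/

/-- The next column of the scanning path: the earliest column `h' > h`
(up to `maxCol`) whose column bottom in the remnant `c` is nonempty and has
value weakly larger than the bottom value of column `h`. -/
def nextCol (T : ℕ → ℕ → ℕ) (c : ℕ → ℕ) (maxCol h : ℕ) : Option ℕ :=
  (List.range' (h + 1) (maxCol - h)).find?
    (fun h' => decide (0 < c h' ∧ T h (c h) ≤ T h' (c h')))

/-- Columns of the scanning path (EWIS of column bottoms) starting at column `h`,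
with explicit fuel. -/
def pathColsAux (T : ℕ → ℕ → ℕ) (c : ℕ → ℕ) (maxCol : ℕ) : ℕ → ℕ → List ℕ
  | 0, h => [h]
  | fuel + 1, h =>
    match nextCol T c maxCol h with
    | none => [h]
    | some h' => h :: pathColsAux T c maxCol fuel h'

/-- Columns of the scanning path starting at the bottom of column `j` of the
remnant with column lengths `c`. -/
def pathCols (T : ℕ → ℕ → ℕ) (c : ℕ → ℕ) (maxCol j : ℕ) : List ℕ :=
  pathColsAux T c maxCol maxCol j

/-- Remove the scanning path starting in column `j` from the remnant `c`. -/
def removePath (T : ℕ → ℕ → ℕ) (c : ℕ → ℕ) (maxCol j : ℕ) : ℕ → ℕ :=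
  fun h => if h ∈ pathCols T c maxCol j then c h - 1 else c h

/-- Iterate path removal `r` times, always starting from column `j`. -/
def remnantIter (T : ℕ → ℕ → ℕ) (c0 : ℕ → ℕ) (maxCol j : ℕ) : ℕ → ℕ → ℕ
  | 0 => c0
  | r + 1 => removePath T (remnantIter T c0 maxCol j r) maxCol j

/-- Column lengths of the remnant tableau `T^{(j;i)}`. -/
def remnant (lam : NPartition n) (T : ℕ → ℕ → ℕ) (j i : ℕ) : ℕ → ℕ :=
  remnantIter T (zeta lam) (lam.part 1) j (zeta lam j - i)

/-- The scanning path `P(T; j, i)`, recorded by its list of columns. -/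
def scanPath (lam : NPartition n) (T : ℕ → ℕ → ℕ) (j i : ℕ) : List ℕ :=
  pathCols T (remnant lam T j i) (lam.part 1) j

/-- The scanning value `S(T; j, i)`: the last value of the EWIS from `(j,i)`. -/
def scanValue (lam : NPartition n) (T : ℕ → ℕ → ℕ) (j i : ℕ) : ℕ :=
  T ((scanPath lam T j i).getLastD j)
    (remnant lam T j i ((scanPath lam T j i).getLastD j))

/-- The box `(l,k)` lies on the scanning path `P(T; j, i)`. -/
def InScanPath (lam : NPartition n) (T : ℕ → ℕ → ℕ) (j i l k : ℕ) : Prop :=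
  l ∈ scanPath lam T j i ∧ k = remnant lam T j i l

/-- `m(U)` where `U` is the remnant with column lengths `c` restricted to the
columns `l+1, …, maxCol`:  the maximum of the column-bottom values, with the
convention `m((())) = 1` for the empty tableau. -/
def mEast (T : ℕ → ℕ → ℕ) (c : ℕ → ℕ) (maxCol l : ℕ) : ℕ :=
  max 1 (((Finset.Icc (l + 1) maxCol).filter fun h => 0 < c h).sup fun h => T h (c h))

/-! ### The condition sets A, C, and B -/

/-- The set `A_λ(T, π; l, k)`. -/
def Aset (lam : NPartition n) (T : ℕ → ℕ → ℕ) (p : ℕ → ℕ) (l k : ℕ) : Set ℕ :=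
  if keyTab lam p l k < mEast T (remnant lam T l k) (lam.part 1) l then (∅ : Set ℕ)
  else Set.Icc k (min (keyTab lam p l k) (min (south lam T l k - 1) (east lam T l k)))

/-- The set `C_λ(T, π; l, k)`. -/
def Cset (lam : NPartition n) (T : ℕ → ℕ → ℕ) (p : ℕ → ℕ) (l k : ℕ) : Set ℕ :=
  if l = lam.part 1 then {keyTab lam p l k}
  else if keyTab lam p l k < mEast T (remnant lam T l k) (lam.part 1) l then (∅ : Set ℕ)
  else if mEast T (remnant lam T l k) (lam.part 1) l = keyTab lam p l k then
    Set.Icc k (min (keyTab lam p l k) (min (south lam T l k - 1) (east lam T l k)))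
  else {keyTab lam p l k} ∩ Set.Icc k (min (south lam T l k - 1) (east lam T l k))

/-- The row index `a(l,k;j)`:  the `i` with `(l-1,k) ∈ P(T;j,i)`
(convention `a(l,k;l) = k`). -/
def aIdx (lam : NPartition n) (T : ℕ → ℕ → ℕ) (l k j : ℕ) : ℕ :=
  if j = l then k
  else ((Finset.Icc 1 (zeta lam j)).filter fun i => InScanPath lam T j i (l - 1) k).sup id

/-- The row index `b(l,k;j)`:  the `i` with `(l,k+1) ∈ P(T;j,i)` when `k < ζ_l`,
and `ζ_j + 1` when `k = ζ_l` (convention `b(l,k;l) = k+1`). -/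
def bIdx (lam : NPartition n) (T : ℕ → ℕ → ℕ) (l k j : ℕ) : ℕ :=
  if j = l then k + 1
  else if k = zeta lam l then zeta lam j + 1
  else ((Finset.Icc 1 (zeta lam j)).filter fun i => InScanPath lam T j i l (k + 1)).sup id

/-- `E(l,k;j,i)`:  the value of `T` at the box `(h,m)` of `P(T;j,i)` with `h < l`
maximal (convention `E(l,k;l,k) = k`). -/
def Epath (lam : NPartition n) (T : ℕ → ℕ → ℕ) (l k j i : ℕ) : ℕ :=
  if j = l then k
  else
    T (((scanPath lam T j i).filter fun h => decide (h < l)).foldr max 0)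
      (remnant lam T j i (((scanPath lam T j i).filter fun h => decide (h < l)).foldr max 0))

/-- The set `B_λ(T, π; l, k) = ⋂_{j=1}^{l} ⋃_{i=a(j)}^{b(j)-1} [E(l,k;j,i), Y_λ(π)(j,i)]`. -/
def Bset (lam : NPartition n) (T : ℕ → ℕ → ℕ) (p : ℕ → ℕ) (l k : ℕ) : Set ℕ :=
  {v | ∀ j, 1 ≤ j → j ≤ l →
    ∃ i, aIdx lam T l k j ≤ i ∧ i + 1 ≤ bIdx lam T l k j ∧
      Epath lam T l k j i ≤ v ∧ v ≤ keyTab lam p j i}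

/-! ### The left scanning method -/

/-- The largest row `r ≤ c j` of column `j` whose value is at most `x`. -/
def maxRow (T : ℕ → ℕ → ℕ) (c : ℕ → ℕ) (j x : ℕ) : ℕ :=
  ((Finset.Icc 1 (c j)).filter fun r => T j r ≤ x).sup id

/-- The rows of the maximizing weakly decreasing sequence through columns
`j, j-1, …, 1` with initial bound `x`, in a remnant with column lengths `c`. -/
def leftRows (T : ℕ → ℕ → ℕ) (c : ℕ → ℕ) : ℕ → ℕ → List ℕ
  | 0, _ => []
  | j + 1, x => maxRow T c (j + 1) x :: leftRows T c j (T (j + 1) (maxRow T c (j + 1) x))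

/-- The column-1 value at the end of the left scanning path originating at `(j, r)`. -/
def leftEndVal (T : ℕ → ℕ → ℕ) (c : ℕ → ℕ) (j r : ℕ) : ℕ :=
  T 1 ((leftRows T c j (T j r)).getLastD 0)

/-- Remove the left scanning path originating at `(l, c l)`, together with
all values beneath it, from the remnant `c`. -/
def leftRemovePath (T : ℕ → ℕ → ℕ) (c : ℕ → ℕ) (l : ℕ) : ℕ → ℕ :=
  fun j =>
    if 1 ≤ j ∧ j ≤ l then (leftRows T c l (T l (c l))).getD (l - j) 0 - 1 else c j

/-- Iterate left-path removal `r` times (always for column `l`). -/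
def leftRemnantIter (T : ℕ → ℕ → ℕ) (c0 : ℕ → ℕ) (l : ℕ) : ℕ → ℕ → ℕ
  | 0 => c0
  | r + 1 => leftRemovePath T (leftRemnantIter T c0 l r) l

/-- Column lengths of the left remnant used to compute `M(T; l, i)`:
`T` restricted to its first `l` columns with the left scanning paths
originating at `(l, ζ_l), …, (l, i+1)` (and everything beneath them) removed. -/
def leftRemnant (lam : NPartition n) (T : ℕ → ℕ → ℕ) (l i : ℕ) : ℕ → ℕ :=
  leftRemnantIter T (zeta lam) l (zeta lam l - i)

/-- The left scanning value `M(T; l, i)`. -/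
def leftScanValue (lam : NPartition n) (T : ℕ → ℕ → ℕ) (l i : ℕ) : ℕ :=
  leftEndVal T (leftRemnant lam T l i) l i

/-! ### The condition sets F and G -/

/-- The set `F_λ(T, σ; l, k)`. -/
def Fset (lam : NPartition n) (T : ℕ → ℕ → ℕ) (sg : ℕ → ℕ) (l k : ℕ) : Set ℕ :=
  if l = 1 then Set.Icc (keyTab lam sg 1 k) (south lam T 1 k - 1)
  else
    let U := leftRemnant lam T l k
    let q := maxRow T U (l - 1) (south lam T l k - 1)
    let P := (Finset.Icc 1 q).filter fun h => keyTab lam sg l k ≤ leftEndVal T U (l - 1) h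
    if hP : P.Nonempty then Set.Icc (T (l - 1) (P.min' hP)) (south lam T l k - 1)
    else (∅ : Set ℕ)

/-- The set `G_λ(T, σ; l, k)`. -/
def Gset (lam : NPartition n) (T : ℕ → ℕ → ℕ) (sg : ℕ → ℕ) (l k : ℕ) : Set ℕ :=
  if l = 1 then {keyTab lam sg 1 k}
  else
    let U := leftRemnant lam T l k
    let q := maxRow T U (l - 1) (south lam T l k - 1)
    let P := (Finset.Icc 1 q).filter fun h => leftEndVal T U (l - 1) h = keyTab lam sg l k
    if hP : P.Nonempty then
      Set.Icc (T (l - 1) (P.min' hP))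
        (min ((if P.max' hP + 1 ≤ U (l - 1) then T (l - 1) (P.max' hP + 1) else n + 1) - 1)
          (south lam T l k - 1))
    else (∅ : Set ℕ)

/-! ### Polynomials, divided differences, words -/

/-- Polynomials in the variables `X 1, …, X n` (indexed by `ℕ`) over `ℚ`. -/
abbrev Poly : Type := MvPolynomial ℕ ℚ

/-- The action of `s_i` on polynomials: interchange `x_i` and `x_{i+1}`. -/
def sOp (i : ℕ) (P : Poly) : Poly := rename (Equiv.swap i (i + 1)) P

/-- The divided difference operator
`ρ_i = (x_i - x_{i+1})⁻¹ ∘ (1 - s_i) ∘ x_i`, defined as the unique polynomial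
`Q` with `(x_i - x_{i+1}) Q = x_i P - s_i (x_i P)`. -/
def rhoOp (i : ℕ) (P : Poly) : Poly :=
  if h : ∃ Q : Poly, (X i - X (i + 1)) * Q = X i * P - sOp i (X i * P) then h.choose
  else 0

/-- The operator `ρ̄_i := ρ_i - 1`. -/
def rhoBarOp (i : ℕ) (P : Poly) : Poly := rhoOp i P - P

/-- Apply operators indexed by a word `[i_t, …, i_1]`, rightmost first:
`applyOps f [i_t, …, i_1] P = f i_t (⋯ (f i_1 P))`. -/
def applyOps (f : ℕ → Poly → Poly) : List ℕ → Poly → Poly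
  | [], P => P
  | i :: w, P => f i (applyOps f w P)

/-- The monomial `x_1^{λ_1} ⋯ x_n^{λ_n}`. -/
def lamMonomial (lam : NPartition n) : Poly :=
  ∏ i ∈ Finset.Icc 1 n, X i ^ lam.part i

/-- The weight monomial `x^T = ∏ x_i^{c_i}` of the filling `T`. -/
def weight (lam : NPartition n) (T : ℕ → ℕ → ℕ) : Poly :=
  ∏ b ∈ boxes lam, X (T b.1 b.2)

/-- The simple reflection `s_i` acting by value. -/
def swapVal (i v : ℕ) : ℕ := if v = i then i + 1 else if v = i + 1 then i else v

/-- The permutation `s_{i_t} ⋯ s_{i_1}.(1, 2, …, n)` obtained by applying the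
word `w = [i_t, …, i_1]` (rightmost letter first, each acting by value) to the
identity. -/
def permOfWord (w : List ℕ) : ℕ → ℕ := w.foldr (fun i f => swapVal i ∘ f) id

/-- `w` is a word in letters `s_1, …, s_{n-1}` producing `π` from `(1, …, n)`. -/
def WordFor (n : ℕ) (w : List ℕ) (p : ℕ → ℕ) : Prop :=
  (∀ i ∈ w, 1 ≤ i ∧ i + 1 ≤ n) ∧ ∀ t, 1 ≤ t → t ≤ n → permOfWord w t = p t

/-- `w` is a reduced word for `π`: it produces `π` with minimal length. -/
def IsReducedWord (n : ℕ) (w : List ℕ) (p : ℕ → ℕ) : Prop :=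
  WordFor n w p ∧ ∀ w' : List ℕ, WordFor n w' p → w.length ≤ w'.length

/-- The atom `c_λ(π;x) = ρ̄_{i_t} ⋯ ρ̄_{i_1} . x_1^{λ_1} ⋯ x_n^{λ_n}`, computed
from a choice of reduced word for `π` (it is independent of this choice). -/
def atomPoly (lam : NPartition n) (p : ℕ → ℕ) : Poly :=
  if h : ∃ w : List ℕ, IsReducedWord n w p then
    applyOps rhoBarOp h.choose (lamMonomial lam)
  else 0

/-! ### `S_n^λ` -/

/-- The set `Q_λ` of distinct column lengths of `λ`. -/
def Qset (lam : NPartition n) : Finset ℕ := (Finset.Icc 1 (lam.part 1)).image (zeta lam)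

/-- `π ∈ S_n^λ`: an `n`-permutation increasing on each block `[q_{r-1}+1, q_r]`
cut out by the column lengths of `λ` (equivalently, `π_i < π_j` whenever
`i < j` and no element of `Q_λ` lies in `[i, j)`). -/
def InSnLam (lam : NPartition n) (p : ℕ → ℕ) : Prop :=
  IsNPerm n p ∧ ∀ i j, 1 ≤ i → i < j → j ≤ n →
    (∀ q ∈ Qset lam, q < i ∨ j ≤ q) → p i < p j

end KeyPoly

namespace KeyPoly


/-! ### Auxiliary lemmas for Theorem 9.2 -/

variable {n : ℕ}

lemma zeta_le_n (lam : NPartition n) (j : ℕ) : zeta lam j ≤ n := by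
  classical
  have : ((Finset.Icc 1 n).filter fun i => j ≤ lam.part i).card ≤ (Finset.Icc 1 n).card :=
    Finset.card_filter_le _ _
  simpa [zeta] using this

lemma zeta_anti (lam : NPartition n) {j j' : ℕ} (h : j ≤ j') : zeta lam j' ≤ zeta lam j := by
  classical
  refine Finset.card_le_card ?_
  intro i hi
  simp only [Finset.mem_filter] at hi ⊢
  exact ⟨hi.1, le_trans h hi.2⟩

lemma le_zeta_of_inShape {lam : NPartition n} {j i : ℕ} (h : InShape lam j i) :
    i ≤ zeta lam j := by
  classical
  obtain ⟨hj, hi, hin, hpart⟩ := h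
  have hsub : Finset.Icc 1 i ⊆ (Finset.Icc 1 n).filter fun i' => j ≤ lam.part i' := by
    intro x hx
    simp only [Finset.mem_Icc] at hx
    simp only [Finset.mem_filter, Finset.mem_Icc]
    exact ⟨⟨hx.1, le_trans hx.2 hin⟩, le_trans hpart (lam.antitone hx.1 hx.2)⟩
  have := Finset.card_le_card hsub
  simpa [zeta] using this

lemma inShape_of_le_zeta {lam : NPartition n} {j i : ℕ} (hj : 1 ≤ j) (hi : 1 ≤ i)
    (h : i ≤ zeta lam j) : InShape lam j i := by
  classical
  have hin : i ≤ n := le_trans h (zeta_le_n lam j)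
  refine ⟨hj, hi, hin, ?_⟩
  by_contra hlt
  push_neg at hlt
  have hsub : ((Finset.Icc 1 n).filter fun i' => j ≤ lam.part i') ⊆ Finset.Icc 1 (i - 1) := by
    intro x hx
    simp only [Finset.mem_filter, Finset.mem_Icc] at hx
    refine Finset.mem_Icc.2 ⟨hx.1.1, ?_⟩
    by_contra hxi
    push_neg at hxi
    have : lam.part x ≤ lam.part i := lam.antitone hi (by omega)
    omega
  have hcard := Finset.card_le_card hsub
  simp only [Nat.card_Icc] at hcard
  have : zeta lam j ≤ i - 1 := by simpa [zeta] using hcard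
  omega

lemma col_strictMono {lam : NPartition n} {T : ℕ → ℕ → ℕ} (hT : IsSSYT lam T)
    {j i i' : ℕ} (hj : 1 ≤ j) (hi : 1 ≤ i) (hii : i < i') (hi' : i' ≤ zeta lam j) :
    T j i < T j i' := by
  induction i' with
  | zero => omega
  | succ m ih =>
    rcases Nat.lt_succ_iff_lt_or_eq.1 hii with hlt | heq
    · exact lt_trans (ih hlt (by omega))
        (hT.2.2 j m (inShape_of_le_zeta hj (by omega) hi'))
    · subst heq
      exact hT.2.2 j i (inShape_of_le_zeta hj (by omega) hi')

lemma col_mono {lam : NPartition n} {T : ℕ → ℕ → ℕ} (hT : IsSSYT lam T)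
    {j i i' : ℕ} (hj : 1 ≤ j) (hi : 1 ≤ i) (hii : i ≤ i') (hi' : i' ≤ zeta lam j) :
    T j i ≤ T j i' := by
  rcases eq_or_lt_of_le hii with rfl | h
  · exact le_rfl
  · exact (col_strictMono hT hj hi h hi').le

lemma maxRow_le (T : ℕ → ℕ → ℕ) (c : ℕ → ℕ) (j x : ℕ) : maxRow T c j x ≤ c j := by
  classical
  unfold maxRow
  refine Finset.sup_le fun r hr => ?_
  simp only [Finset.mem_filter, Finset.mem_Icc] at hr
  exact hr.1.2

lemma le_maxRow {T : ℕ → ℕ → ℕ} {c : ℕ → ℕ} {j x r : ℕ}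
    (h1 : 1 ≤ r) (h2 : r ≤ c j) (h3 : T j r ≤ x) : r ≤ maxRow T c j x := by
  classical
  unfold maxRow
  exact Finset.le_sup (f := id)
    (by simp only [Finset.mem_filter, Finset.mem_Icc]; exact ⟨⟨h1, h2⟩, h3⟩)

lemma maxRow_le_of {T : ℕ → ℕ → ℕ} {c : ℕ → ℕ} {j x b : ℕ}
    (h : ∀ r, 1 ≤ r → r ≤ c j → T j r ≤ x → r ≤ b) : maxRow T c j x ≤ b := by
  classical
  unfold maxRow
  refine Finset.sup_le fun r hr => ?_
  simp only [Finset.mem_filter, Finset.mem_Icc] at hr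
  exact h r hr.1.1 hr.1.2 hr.2

lemma maxRow_spec {T : ℕ → ℕ → ℕ} {c : ℕ → ℕ} {j x r : ℕ}
    (h1 : 1 ≤ r) (h2 : r ≤ c j) (h3 : T j r ≤ x) :
    1 ≤ maxRow T c j x ∧ maxRow T c j x ≤ c j ∧ T j (maxRow T c j x) ≤ x := by
  classical
  have hne : ((Finset.Icc 1 (c j)).filter fun r => T j r ≤ x).Nonempty :=
    ⟨r, by simp only [Finset.mem_filter, Finset.mem_Icc]; exact ⟨⟨h1, h2⟩, h3⟩⟩
  obtain ⟨b, hb, hev⟩ := Finset.exists_mem_eq_sup _ hne id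
  simp only [Finset.mem_filter, Finset.mem_Icc] at hb
  unfold maxRow
  rw [hev]
  exact ⟨hb.1.1, hb.1.2, hb.2⟩

lemma maxRow_mono {T : ℕ → ℕ → ℕ} {c : ℕ → ℕ} {j x x' : ℕ} (h : x ≤ x') :
    maxRow T c j x ≤ maxRow T c j x' := by
  classical
  unfold maxRow
  refine Finset.sup_mono ?_
  intro r hr
  simp only [Finset.mem_filter, Finset.mem_Icc] at hr ⊢
  exact ⟨hr.1, le_trans hr.2 h⟩

lemma maxRow_self {lam : NPartition n} {T : ℕ → ℕ → ℕ} (hT : IsSSYT lam T) {c : ℕ → ℕ}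
    {j r : ℕ} (hj : 1 ≤ j) (h1 : 1 ≤ r) (h2 : r ≤ c j) (h3 : c j ≤ zeta lam j) :
    maxRow T c j (T j r) = r := by
  refine le_antisymm (maxRow_le_of fun r' h1' h2' h3' => ?_) (le_maxRow h1 h2 le_rfl)
  by_contra hgt
  push_neg at hgt
  exact absurd h3' (not_le.2 (col_strictMono hT hj h1 hgt (le_trans h2' h3)))

lemma leftRows_length (T : ℕ → ℕ → ℕ) (c : ℕ → ℕ) :
    ∀ m x, (leftRows T c m x).length = m
  | 0, _ => rfl
  | m + 1, x => by
      simp only [leftRows, List.length_cons, leftRows_length T c m]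

lemma getLastD_irrel {l : List ℕ} (h : l ≠ []) (d d' : ℕ) : l.getLastD d = l.getLastD d' := by
  cases l with
  | nil => exact absurd rfl h
  | cons a t =>
    rw [List.getLastD_cons, List.getLastD_cons]

lemma leftRows_head (T : ℕ → ℕ → ℕ) (c : ℕ → ℕ) :
    ∀ m x, 1 ≤ m → (leftRows T c m x).getD 0 0 = maxRow T c m x
  | 0, _, h => absurd h (by omega)
  | m + 1, x, _ => by simp [leftRows]

lemma adj_anti {c : ℕ → ℕ} {l : ℕ} (h : ∀ j, 1 ≤ j → j + 1 ≤ l → c (j + 1) ≤ c j)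
    {j j' : ℕ} (hj : 1 ≤ j) (hjj : j ≤ j') (hj'l : j' ≤ l) : c j' ≤ c j := by
  induction j', hjj using Nat.le_induction with
  | base => exact le_rfl
  | succ j' hjj ih => exact le_trans (h j' (le_trans hj hjj) hj'l) (ih (by omega))

lemma leftRows_spec {lam : NPartition n} {T : ℕ → ℕ → ℕ} (hT : IsSSYT lam T) (c : ℕ → ℕ) :
    ∀ m x, (∀ j, 1 ≤ j → j ≤ m → 1 ≤ c j ∧ c j ≤ zeta lam j) →
      (1 ≤ m → T m 1 ≤ x) →
      (∀ j, 1 ≤ j → j ≤ m →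
        1 ≤ (leftRows T c m x).getD (m - j) 0 ∧
        (leftRows T c m x).getD (m - j) 0 ≤ c j) ∧
      ((∀ j, 1 ≤ j → j + 1 ≤ m → c (j + 1) ≤ c j) →
        ∀ j, 1 ≤ j → j + 1 ≤ m →
          (leftRows T c m x).getD (m - (j + 1)) 0 ≤ (leftRows T c m x).getD (m - j) 0) := by
  intro m
  induction m with
  | zero =>
    intro x _ _
    exact ⟨fun j hj hjm => by omega, fun _ j hj hjm => by omega⟩
  | succ m ih =>
    intro x hc hx
    have hc1 : 1 ≤ c (m + 1) := (hc (m + 1) (by omega) le_rfl).1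
    have hcz : c (m + 1) ≤ zeta lam (m + 1) := (hc (m + 1) (by omega) le_rfl).2
    have hTm1 : T (m + 1) 1 ≤ x := hx (by omega)
    set r := maxRow T c (m + 1) x with hr_def
    have hrspec := maxRow_spec (T := T) (c := c) (j := m + 1) (x := x) le_rfl hc1 hTm1
    have hr1 : 1 ≤ r := hrspec.1
    have hrc : r ≤ c (m + 1) := hrspec.2.1
    have hshape1 : InShape lam (m + 1) 1 := inShape_of_le_zeta (by omega) le_rfl (by omega)
    have hy : 1 ≤ m → T m 1 ≤ T (m + 1) r := by
      intro hm
      calc T m 1 ≤ T (m + 1) 1 := hT.2.1 m 1 hshape1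
        _ ≤ T (m + 1) r := col_mono hT (by omega) le_rfl hr1 (le_trans hrc hcz)
    have hunfold : leftRows T c (m + 1) x = r :: leftRows T c m (T (m + 1) r) := by
      simp [leftRows, hr_def]
    have ihm := ih (T (m + 1) r) (fun j hj hjm => hc j hj (by omega)) hy
    constructor
    · intro j hj hjm
      rcases Nat.lt_succ_iff_lt_or_eq.1 (Nat.lt_succ_of_le hjm) with hlt | heq
      · have hidx : m + 1 - j = (m - j) + 1 := by omega
        rw [hunfold, hidx, List.getD_cons_succ]
        exact ihm.1 j hj (by omega)
      · subst heq
        rw [hunfold]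
        simpa using ⟨hr1, hrc⟩
    · intro hanti j hj hj1
      rcases Nat.lt_succ_iff_lt_or_eq.1 (Nat.lt_succ_of_le hj1) with hlt | heq
      · have hidx1 : m + 1 - (j + 1) = (m - (j + 1)) + 1 := by omega
        have hidx2 : m + 1 - j = (m - j) + 1 := by omega
        rw [hunfold, hidx1, hidx2, List.getD_cons_succ, List.getD_cons_succ]
        exact ihm.2 (fun j' hj' hj'1 => hanti j' hj' (by omega)) j hj (by omega)
      · have hjm : j = m := by omega
        subst hjm
        have hidx1 : j + 1 - (j + 1) = 0 := by omega
        have hidx2 : j + 1 - j = 1 := by omega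
        rw [hunfold, hidx1, hidx2, List.getD_cons_zero, List.getD_cons_succ]
        rw [leftRows_head T c j (T (j + 1) r) hj]
        refine le_maxRow hr1 (le_trans hrc (hanti j hj le_rfl)) ?_
        exact hT.2.1 j r (inShape_of_le_zeta (by omega) hr1 (le_trans hrc hcz))

lemma leftRows_lastVal_mono {lam : NPartition n} {T : ℕ → ℕ → ℕ} (hT : IsSSYT lam T)
    (c : ℕ → ℕ) :
    ∀ m x x', (∀ j, 1 ≤ j → j ≤ m → 1 ≤ c j ∧ c j ≤ zeta lam j) →
      x ≤ x' → (1 ≤ m → T m 1 ≤ x) →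
      T 1 ((leftRows T c m x).getLastD 0) ≤ T 1 ((leftRows T c m x').getLastD 0) := by
  intro m
  induction m with
  | zero => intro x x' _ _ _; exact le_rfl
  | succ m ih =>
    intro x x' hc hxx hx
    have hc1 : 1 ≤ c (m + 1) := (hc (m + 1) (by omega) le_rfl).1
    have hcz : c (m + 1) ≤ zeta lam (m + 1) := (hc (m + 1) (by omega) le_rfl).2
    have hTm1 : T (m + 1) 1 ≤ x := hx (by omega)
    set r := maxRow T c (m + 1) x with hr_def
    set r' := maxRow T c (m + 1) x' with hr'_def
    have hrspec := maxRow_spec (T := T) (c := c) (j := m + 1) (x := x) le_rfl hc1 hTm1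
    have hr'spec := maxRow_spec (T := T) (c := c) (j := m + 1) (x := x')
      le_rfl hc1 (le_trans hTm1 hxx)
    have hrr : r ≤ r' := maxRow_mono hxx
    have hbb : T (m + 1) r ≤ T (m + 1) r' :=
      col_mono hT (by omega) hrspec.1 hrr (le_trans hr'spec.2.1 hcz)
    have hunf : leftRows T c (m + 1) x = r :: leftRows T c m (T (m + 1) r) := by
      simp [leftRows, hr_def]
    have hunf' : leftRows T c (m + 1) x' = r' :: leftRows T c m (T (m + 1) r') := by
      simp [leftRows, hr'_def]
    rw [hunf, hunf']
    cases m with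
    | zero =>
      simp only [leftRows, List.getLastD_cons, List.getLastD_nil]
      exact col_mono hT le_rfl hrspec.1 hrr (le_trans hr'spec.2.1 hcz)
    | succ m' =>
      have hne : leftRows T c (m' + 1) (T (m' + 1 + 1) r) ≠ [] := by
        have := leftRows_length T c (m' + 1) (T (m' + 1 + 1) r)
        intro hnil; rw [hnil] at this; simp at this
      have hne' : leftRows T c (m' + 1) (T (m' + 1 + 1) r') ≠ [] := by
        have := leftRows_length T c (m' + 1) (T (m' + 1 + 1) r')
        intro hnil; rw [hnil] at this; simp at this
      rw [List.getLastD_cons, List.getLastD_cons, getLastD_irrel hne r 0,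
        getLastD_irrel hne' r' 0]
      refine ih (T (m' + 1 + 1) r) (T (m' + 1 + 1) r') (fun j hj hjm => hc j hj (by omega)) hbb ?_
      intro _
      have hshape1 : InShape lam (m' + 1 + 1) 1 := inShape_of_le_zeta (by omega) le_rfl (by omega)
      calc T (m' + 1) 1 ≤ T (m' + 1 + 1) 1 := hT.2.1 (m' + 1) 1 hshape1
        _ ≤ T (m' + 1 + 1) r := col_mono hT (by omega) le_rfl hrspec.1 (le_trans hrspec.2.1 hcz)

lemma leftRows_restart {T : ℕ → ℕ → ℕ} {c : ℕ → ℕ} {m x h0 : ℕ} (hm : 1 ≤ m)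
    (hd : maxRow T c m x = h0) (hd' : maxRow T c m (T m h0) = h0) :
    leftRows T c m x = leftRows T c m (T m h0) := by
  obtain ⟨m', rfl⟩ : ∃ m', m = m' + 1 := ⟨m - 1, by omega⟩
  simp only [leftRows, hd, hd']

/-- The remnant invariant. -/
lemma leftRemnantIter_inv {lam : NPartition n} {T : ℕ → ℕ → ℕ} (hT : IsSSYT lam T)
    {l : ℕ} (hl : 1 ≤ l) :
    ∀ t, t ≤ zeta lam l →
      (∀ j, 1 ≤ j → j ≤ l → leftRemnantIter T (zeta lam) l t j ≤ zeta lam j) ∧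
      (∀ j, 1 ≤ j → j + 1 ≤ l →
        leftRemnantIter T (zeta lam) l t (j + 1) ≤ leftRemnantIter T (zeta lam) l t j) ∧
      leftRemnantIter T (zeta lam) l t l = zeta lam l - t := by
  intro t
  induction t with
  | zero =>
    intro _
    exact ⟨fun j _ _ => le_rfl, fun j _ hj1 => zeta_anti lam (by omega), by simp [leftRemnantIter]⟩
  | succ t ih =>
    intro ht
    obtain ⟨ihb, iha, ihl⟩ := ih (by omega)
    set ct := leftRemnantIter T (zeta lam) l t with hct_def
    have hctl : 1 ≤ ct l := by omega
    have hpos : ∀ j, 1 ≤ j → j ≤ l → 1 ≤ ct j ∧ ct j ≤ zeta lam j := by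
      intro j hj hjl
      exact ⟨le_trans hctl (adj_anti iha hj hjl le_rfl), ihb j hj hjl⟩
    have hx : 1 ≤ l → T l 1 ≤ T l (ct l) :=
      fun _ => col_mono hT hl le_rfl hctl (le_trans (hpos l hl le_rfl).2 le_rfl)
    have hspec := leftRows_spec hT ct l (T l (ct l)) hpos hx
    have hnext : leftRemnantIter T (zeta lam) l (t + 1) = leftRemovePath T ct l := rfl
    have hval : ∀ j, 1 ≤ j → j ≤ l →
        leftRemovePath T ct l j = (leftRows T ct l (T l (ct l))).getD (l - j) 0 - 1 := by
      intro j hj hjl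
      simp [leftRemovePath, hj, hjl]
    have hhead : (leftRows T ct l (T l (ct l))).getD 0 0 = ct l := by
      rw [leftRows_head T ct l _ hl]
      exact maxRow_self hT hl hctl le_rfl (hpos l hl le_rfl).2
    refine ⟨?_, ?_, ?_⟩
    · intro j hj hjl
      rw [hnext, hval j hj hjl]
      have := (hspec.1 j hj hjl).2
      have := ihb j hj hjl
      omega
    · intro j hj hj1
      rw [hnext, hval (j + 1) (by omega) hj1, hval j hj (by omega)]
      have := hspec.2 iha j hj hj1
      omega
    · rw [hnext, hval l hl le_rfl]
      have hll : l - l = 0 := by omega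
      rw [hll, hhead]
      omega


/-- The pointwise form of Theorem 9.2. -/
lemma gset_pointwise {lam : NPartition n} {T : ℕ → ℕ → ℕ} (hT : IsSSYT lam T)
    (sg : ℕ → ℕ) {l k : ℕ} (hin : InShape lam l k) :
    leftScanValue lam T l k = keyTab lam sg l k ↔ T l k ∈ Gset lam T sg l k := by
  classical
  have hl1 : 1 ≤ l := hin.1
  have hk1 : 1 ≤ k := hin.2.1
  have hkz : k ≤ zeta lam l := le_zeta_of_inShape hin
  have hinv := leftRemnantIter_inv (T := T) hT hl1 (zeta lam l - k) (by omega)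
  have hUeq : leftRemnant lam T l k = leftRemnantIter T (zeta lam) l (zeta lam l - k) := rfl
  have hUl : leftRemnant lam T l k l = k := by rw [hUeq, hinv.2.2]; omega
  have hUb : ∀ j, 1 ≤ j → j ≤ l →
      k ≤ leftRemnant lam T l k j ∧ leftRemnant lam T l k j ≤ zeta lam j := by
    intro j hj hjl
    constructor
    · rw [hUeq]
      calc k = zeta lam l - (zeta lam l - k) := by omega
        _ = leftRemnantIter T (zeta lam) l (zeta lam l - k) l := hinv.2.2.symm
        _ ≤ _ := adj_anti hinv.2.1 hj hjl le_rfl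
    · rw [hUeq]; exact hinv.1 j hj hjl
  clear hinv hUeq
  rcases Nat.lt_or_ge l 2 with hl2 | hl2
  · -- the case `l = 1`
    have hl1e : l = 1 := by omega
    subst hl1e
    have hscan1 : leftScanValue lam T 1 k = T 1 k := by
      unfold leftScanValue leftEndVal
      have hhead : maxRow T (leftRemnant lam T 1 k) 1 (T 1 k) = k :=
        maxRow_self hT le_rfl hk1 hUl.ge (hUl.le.trans hkz)
      have hrows : leftRows T (leftRemnant lam T 1 k) 1 (T 1 k) =
          [maxRow T (leftRemnant lam T 1 k) 1 (T 1 k)] := rfl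
      rw [hrows, hhead, List.getLastD_cons, List.getLastD_nil]
    rw [hscan1]
    simp [Gset]
  · -- the case `l ≥ 2`
    obtain ⟨m, rfl⟩ : ∃ m, l = m + 1 := ⟨l - 1, by omega⟩
    have hm1 : 1 ≤ m := by omega
    set U := leftRemnant lam T (m + 1) k with hU
    have hUm1 : 1 ≤ U m := le_trans hk1 (hUb m hm1 (by omega)).1
    have hUmz : U m ≤ zeta lam m := (hUb m hm1 (by omega)).2
    have hUm1z : U (m + 1) ≤ zeta lam (m + 1) := (hUb (m + 1) (by omega) le_rfl).2
    have hs : T (m + 1) k < south lam T (m + 1) k := by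
      unfold south
      split
      · exact hT.2.2 (m + 1) k ‹_›
      · have := (hT.1 (m + 1) k hin).2; omega
    have hTkn := hT.1 (m + 1) k hin
    have hshape11 : InShape lam (m + 1) 1 :=
      ⟨by omega, le_rfl, le_trans hk1 hin.2.2.1, le_trans hin.2.2.2 (lam.antitone le_rfl hk1)⟩
    have hTm1k : T m 1 ≤ T (m + 1) k := by
      calc T m 1 ≤ T (m + 1) 1 := hT.2.1 m 1 hshape11
        _ ≤ T (m + 1) k := col_mono hT (by omega) le_rfl hk1 hkz
    obtain ⟨h01, h0U, h0le⟩ :=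
      maxRow_spec (T := T) (c := U) (j := m) (x := T (m + 1) k) le_rfl hUm1 hTm1k
    have hH0self : maxRow T U m (T m (maxRow T U m (T (m + 1) k))) = maxRow T U m (T (m + 1) k) :=
      maxRow_self hT hm1 h01 h0U hUmz
    have hscan : leftScanValue lam T (m + 1) k = leftEndVal T U m (maxRow T U m (T (m + 1) k)) := by
      unfold leftScanValue
      rw [← hU]
      unfold leftEndVal
      have hk_head : maxRow T U (m + 1) (T (m + 1) k) = k :=
        maxRow_self hT (by omega) hk1 hUl.ge (hUl.le.trans hkz)
      have hunf : leftRows T U (m + 1) (T (m + 1) k) = k :: leftRows T U m (T (m + 1) k) := by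
        simp only [leftRows, hk_head]
      rw [hunf]
      have hne : leftRows T U m (T (m + 1) k) ≠ [] := by
        have hlen := leftRows_length T U m (T (m + 1) k)
        intro hnil; rw [hnil] at hlen; simp at hlen; omega
      rw [List.getLastD_cons, getLastD_irrel hne k 0,
        leftRows_restart (T := T) (c := U) hm1 rfl hH0self]
    have gmono : ∀ h h', 1 ≤ h → h ≤ h' → h' ≤ U m →
        leftEndVal T U m h ≤ leftEndVal T U m h' := by
      intro h h' hh1 hhh hh'U
      unfold leftEndVal
      refine leftRows_lastVal_mono hT U m (T m h) (T m h')
        (fun j hj hjm => ⟨le_trans hk1 (hUb j hj (by omega)).1, (hUb j hj (by omega)).2⟩)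
        (col_mono hT hm1 hh1 hhh (le_trans hh'U hUmz)) ?_
      intro _
      exact col_mono hT hm1 le_rfl hh1 (le_trans (le_trans hhh hh'U) hUmz)
    have hx0s : T (m + 1) k ≤ south lam T (m + 1) k - 1 := by omega
    have h0q : maxRow T U m (T (m + 1) k) ≤ maxRow T U m (south lam T (m + 1) k - 1) := maxRow_mono hx0s
    have hqU : maxRow T U m (south lam T (m + 1) k - 1) ≤ U m := maxRow_le T U m _
    have hGeq : Gset lam T sg (m + 1) k =
        (if hP : (((Finset.Icc 1 (maxRow T U m (south lam T (m + 1) k - 1))).filter fun h => leftEndVal T U m h = keyTab lam sg (m + 1) k)).Nonempty then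
          Set.Icc (T m ((((Finset.Icc 1 (maxRow T U m (south lam T (m + 1) k - 1))).filter fun h => leftEndVal T U m h = keyTab lam sg (m + 1) k)).min' hP))
            (min ((if (((Finset.Icc 1 (maxRow T U m (south lam T (m + 1) k - 1))).filter fun h => leftEndVal T U m h = keyTab lam sg (m + 1) k)).max' hP + 1 ≤ U m then T m ((((Finset.Icc 1 (maxRow T U m (south lam T (m + 1) k - 1))).filter fun h => leftEndVal T U m h = keyTab lam sg (m + 1) k)).max' hP + 1) else n + 1) - 1)
              (south lam T (m + 1) k - 1))
        else (∅ : Set ℕ)) := by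
      rw [hU]
      unfold Gset
      rw [if_neg (by omega : ¬ m + 1 = 1)]
      rfl
    rw [hscan, hGeq]
    constructor
    · intro hval
      have hmemP : maxRow T U m (T (m + 1) k) ∈ ((Finset.Icc 1 (maxRow T U m (south lam T (m + 1) k - 1))).filter fun h => leftEndVal T U m h = keyTab lam sg (m + 1) k) := by
        simp only [Finset.mem_filter, Finset.mem_Icc]
        exact ⟨⟨h01, h0q⟩, hval⟩
      have hPne : (((Finset.Icc 1 (maxRow T U m (south lam T (m + 1) k - 1))).filter fun h => leftEndVal T U m h = keyTab lam sg (m + 1) k)).Nonempty := ⟨_, hmemP⟩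
      rw [dif_pos hPne]
      have hminm := Finset.min'_mem _ hPne
      have hmin_le := Finset.min'_le _ _ hmemP
      have hle_max := Finset.le_max' _ _ hmemP
      have hmaxm := Finset.max'_mem _ hPne
      simp only [Finset.mem_filter, Finset.mem_Icc] at hminm hmaxm
      refine Set.mem_Icc.2 ⟨?_, le_min ?_ hx0s⟩
      · calc T m ((((Finset.Icc 1 (maxRow T U m (south lam T (m + 1) k - 1))).filter fun h => leftEndVal T U m h = keyTab lam sg (m + 1) k)).min' hPne) ≤ T m (maxRow T U m (T (m + 1) k)) :=
            col_mono hT hm1 hminm.1.1 hmin_le (le_trans h0U hUmz)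
          _ ≤ T (m + 1) k := h0le
      · split_ifs with hc
        · have hnot : ¬ T m (maxRow T U m (T (m + 1) k) + 1) ≤ T (m + 1) k := by
            intro hle
            have : maxRow T U m (T (m + 1) k) + 1 ≤ maxRow T U m (T (m + 1) k) :=
              le_maxRow (by omega) (le_trans (by omega) hc) hle
            omega
          have hlt : T (m + 1) k < T m (maxRow T U m (T (m + 1) k) + 1) := not_le.1 fun hco => hnot (by omega)
          have hmono2 : T m (maxRow T U m (T (m + 1) k) + 1) ≤ T m ((((Finset.Icc 1 (maxRow T U m (south lam T (m + 1) k - 1))).filter fun h => leftEndVal T U m h = keyTab lam sg (m + 1) k)).max' hPne + 1) :=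
            col_mono hT hm1 (by omega) (by omega) (le_trans hc hUmz)
          omega
        · have := hTkn.2; omega
    · intro hmem
      by_cases hPne : (((Finset.Icc 1 (maxRow T U m (south lam T (m + 1) k - 1))).filter fun h => leftEndVal T U m h = keyTab lam sg (m + 1) k)).Nonempty
      swap
      · rw [dif_neg hPne] at hmem
        exact absurd hmem (Set.notMem_empty _)
      rw [dif_pos hPne, Set.mem_Icc] at hmem
      obtain ⟨hlow, hup⟩ := hmem
      have hminm := Finset.min'_mem _ hPne
      have hmaxm := Finset.max'_mem _ hPne
      simp only [Finset.mem_filter, Finset.mem_Icc] at hminm hmaxm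
      have hminU : (((Finset.Icc 1 (maxRow T U m (south lam T (m + 1) k - 1))).filter fun h => leftEndVal T U m h = keyTab lam sg (m + 1) k)).min' hPne ≤ U m := le_trans hminm.1.2 hqU
      have hmin_le_h0 : (((Finset.Icc 1 (maxRow T U m (south lam T (m + 1) k - 1))).filter fun h => leftEndVal T U m h = keyTab lam sg (m + 1) k)).min' hPne ≤ maxRow T U m (T (m + 1) k) :=
        le_maxRow hminm.1.1 hminU hlow
      have hup1 := le_trans hup (min_le_left _ _)
      have hup2 : maxRow T U m (T (m + 1) k) ≤ (((Finset.Icc 1 (maxRow T U m (south lam T (m + 1) k - 1))).filter fun h => leftEndVal T U m h = keyTab lam sg (m + 1) k)).max' hPne := by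
        by_cases hc : (((Finset.Icc 1 (maxRow T U m (south lam T (m + 1) k - 1))).filter fun h => leftEndVal T U m h = keyTab lam sg (m + 1) k)).max' hPne + 1 ≤ U m
        · rw [if_pos hc] at hup1
          have hx1 : 1 ≤ T (m + 1) k := hTkn.1
          have hlt : T (m + 1) k < T m ((((Finset.Icc 1 (maxRow T U m (south lam T (m + 1) k - 1))).filter fun h => leftEndVal T U m h = keyTab lam sg (m + 1) k)).max' hPne + 1) := by omega
          refine maxRow_le_of fun r hr1 hrU hrle => ?_
          by_contra hgt
          push_neg at hgt
          have : T m ((((Finset.Icc 1 (maxRow T U m (south lam T (m + 1) k - 1))).filter fun h => leftEndVal T U m h = keyTab lam sg (m + 1) k)).max' hPne + 1) ≤ T m r :=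
            col_mono hT hm1 (by omega) (by omega) (le_trans hrU hUmz)
          omega
        · push_neg at hc
          exact le_trans h0U (by omega)
      have e1 : leftEndVal T U m ((((Finset.Icc 1 (maxRow T U m (south lam T (m + 1) k - 1))).filter fun h => leftEndVal T U m h = keyTab lam sg (m + 1) k)).min' hPne) ≤ leftEndVal T U m (maxRow T U m (T (m + 1) k)) :=
        gmono _ _ hminm.1.1 hmin_le_h0 h0U
      have e2 : leftEndVal T U m (maxRow T U m (T (m + 1) k)) ≤ leftEndVal T U m ((((Finset.Icc 1 (maxRow T U m (south lam T (m + 1) k - 1))).filter fun h => leftEndVal T U m h = keyTab lam sg (m + 1) k)).max' hPne) :=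
        gmono _ _ (le_trans hminm.1.1 hmin_le_h0) hup2 (le_trans hmaxm.1.2 hqU)
      rw [hminm.2] at e1
      rw [hmaxm.2] at e2
      exact le_antisymm e2 e1

/-- Theorem 9.2.  `M(T) = Y_λ(σ)` iff every entry of `T`
lies in the corresponding set `G_λ(T, σ; l, k)`. -/
theorem leftScan_eq_key_iff_Gset (n : ℕ) (hn : 1 ≤ n) (lam : NPartition n)
    (sg : ℕ → ℕ) (hsg : IsNPerm n sg) (T : ℕ → ℕ → ℕ) (hT : IsSSYT lam T) :
    (∀ l k, InShape lam l k → leftScanValue lam T l k = keyTab lam sg l k) ↔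
      (∀ l k, InShape lam l k → T l k ∈ Gset lam T sg l k) := by
  constructor
  · intro H l k hin
    exact (gset_pointwise hT sg hin).1 (H l k hin)
  · intro H l k hin
    exact (gset_pointwise hT sg hin).2 (H l k hin)

end KeyPoly
end
end

section
/- For every 1 ≤ i ≤ n−2 and every polynomial P ∈ ℚ[x_1,…,x_n], the operators ρ̄_i := ρ_i − 1 satisfy the braid relation ρ̄_i ρ̄_{i+1} ρ̄_i P = ρ̄_{i+1} ρ̄_i ρ̄_{i+1} P. -/
/-
Common combinatorial set-up for "Tableaux for Key Polynomials, Demazure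
Characters, and Atoms" (Proctor–Willis).

Conventions: a box `(j, i)` means column `j`, row `i`, both 1-indexed.
Partial (remnant) tableaux are encoded by their column-length functions
`c : ℕ → ℕ` (each column of a remnant is a top segment of the original
column), together with the ambient value function `T : ℕ → ℕ → ℕ`.
-/

open scoped BigOperators Classical

noncomputable section

namespace KeyPoly

open MvPolynomial

lemma sOp_mul (i : ℕ) (P Q : Poly) : sOp i (P * Q) = sOp i P * sOp i Q := by simp [sOp]
lemma sOp_sub (i : ℕ) (P Q : Poly) : sOp i (P - Q) = sOp i P - sOp i Q := by simp [sOp]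
lemma sOp_add (i : ℕ) (P Q : Poly) : sOp i (P + Q) = sOp i P + sOp i Q := by simp [sOp]
lemma sOp_C (i : ℕ) (a : ℚ) : sOp i (C a) = C a := by simp [sOp]
lemma sOp_X_left (i : ℕ) : sOp i (X i : Poly) = X (i+1) := by simp [sOp]
lemma sOp_X_right (i : ℕ) : sOp i (X (i+1) : Poly) = X i := by simp [sOp]
lemma sOp_X_ne (i j : ℕ) (h1 : j ≠ i) (h2 : j ≠ i+1) : sOp i (X j : Poly) = X j := by
  simp [sOp, Equiv.swap_apply_of_ne_of_ne h1 h2]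
lemma sOp_sOp (i : ℕ) (P : Poly) : sOp i (sOp i P) = P := by
  simp only [sOp, rename_rename]
  rw [show ((Equiv.swap i (i+1) : ℕ → ℕ) ∘ (Equiv.swap i (i+1) : ℕ → ℕ)) = id from
    funext fun x => Equiv.swap_apply_self _ _ _, rename_id, AlgHom.id_apply]
lemma X_sub_X_ne {j k : ℕ} (h : j ≠ k) : (X j - X k : Poly) ≠ 0 := by
  intro hc
  exact h (MvPolynomial.X_injective (sub_eq_zero.mp hc))

lemma exists_rho (i : ℕ) (P : Poly) :
    ∃ Q : Poly, (X i - X (i + 1)) * Q = X i * P - sOp i (X i * P) := by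
  induction P using MvPolynomial.induction_on with
  | C a =>
    refine ⟨C a, ?_⟩
    rw [sOp_mul, sOp_X_left, sOp_C]; ring
  | add p q hp hq =>
    obtain ⟨Q1, h1⟩ := hp; obtain ⟨Q2, h2⟩ := hq
    refine ⟨Q1 + Q2, ?_⟩
    rw [show X i * (p + q) = X i * p + X i * q from by ring, sOp_add]
    linear_combination h1 + h2
  | mul_X p j hp =>
    obtain ⟨Q, h⟩ := hp
    by_cases hji : j = i
    · subst hji
      refine ⟨Q * X j + sOp j (X j * p), ?_⟩
      have hs : sOp j (X j * (p * X j)) = sOp j (X j * p) * X (j+1) := by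
        rw [show X j * (p * X j) = X j * p * X j from by ring]
        rw [sOp_mul (P := X j * p) (Q := X j), sOp_X_left]
      rw [hs]
      linear_combination X j * h
    · by_cases hji1 : j = i + 1
      · subst hji1
        refine ⟨Q * X (i+1) - sOp i (X i * p), ?_⟩
        have hs : sOp i (X i * (p * X (i+1))) = sOp i (X i * p) * X i := by
          rw [show X i * (p * X (i+1)) = X i * p * X (i+1) from by ring]
          rw [sOp_mul (P := X i * p) (Q := X (i+1)), sOp_X_right]
        rw [hs]
        linear_combination X (i+1) * h
      · refine ⟨Q * X j, ?_⟩
        have hs : sOp i (X i * (p * X j)) = sOp i (X i * p) * X j := by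
          rw [show X i * (p * X j) = X i * p * X j from by ring]
          rw [sOp_mul (P := X i * p) (Q := X j), sOp_X_ne i j hji hji1]
        rw [hs]
        linear_combination X j * h

lemma rhoOp_spec (i : ℕ) (P : Poly) :
    (X i - X (i + 1)) * rhoOp i P = X i * P - sOp i (X i * P) := by
  rw [rhoOp, dif_pos (exists_rho i P)]
  exact (exists_rho i P).choose_spec

lemma rhoOp_spec' (i : ℕ) (P : Poly) :
    (X i - X (i + 1)) * rhoOp i P = X i * P - X (i+1) * sOp i P := by
  rw [rhoOp_spec, sOp_mul, sOp_X_left]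

lemma sOp_rhoOp (i : ℕ) (P : Poly) : sOp i (rhoOp i P) = rhoOp i P := by
  apply mul_left_cancel₀ (X_sub_X_ne (show i ≠ i + 1 by omega))
  have h := rhoOp_spec' i P
  have h2 := congrArg (sOp i) h
  simp only [sOp_mul, sOp_sub, sOp_X_left, sOp_X_right, sOp_sOp] at h2
  linear_combination -h2 - h

lemma rhoOp_idem (i : ℕ) (P : Poly) : rhoOp i (rhoOp i P) = rhoOp i P := by
  apply mul_left_cancel₀ (X_sub_X_ne (show i ≠ i + 1 by omega))
  rw [rhoOp_spec' i (rhoOp i P), sOp_rhoOp]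
  ring

lemma rhoOp_sub (i : ℕ) (P Q : Poly) : rhoOp i (P - Q) = rhoOp i P - rhoOp i Q := by
  apply mul_left_cancel₀ (X_sub_X_ne (show i ≠ i + 1 by omega))
  rw [rhoOp_spec', sOp_sub, mul_sub]
  linear_combination rhoOp_spec' i Q - rhoOp_spec' i P

lemma sOp_braid (i : ℕ) (P : Poly) :
    sOp (i+1) (sOp i (sOp (i+1) P)) = sOp i (sOp (i+1) (sOp i P)) := by
  simp only [sOp, rename_rename]
  have key : (Equiv.swap (i+1) (i+1+1) : ℕ → ℕ) ∘ (Equiv.swap i (i+1) : ℕ → ℕ)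
      ∘ (Equiv.swap (i+1) (i+1+1) : ℕ → ℕ)
      = (Equiv.swap i (i+1) : ℕ → ℕ) ∘ (Equiv.swap (i+1) (i+1+1) : ℕ → ℕ)
      ∘ (Equiv.swap i (i+1) : ℕ → ℕ) := by
    funext x
    simp only [Function.comp_apply, Equiv.swap_apply_def]
    split_ifs <;> omega
  rw [key]
lemma rhoOp_braid (i : ℕ) (P : Poly) :
    rhoOp i (rhoOp (i+1) (rhoOp i P)) = rhoOp (i+1) (rhoOp i (rhoOp (i+1) P)) := by
  have hab : (i : ℕ) ≠ i + 1 := by omega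
  have hac : (i : ℕ) ≠ i + 2 := by omega
  have hbc : (i + 1 : ℕ) ≠ i + 2 := by omega
  have h1 := rhoOp_spec' i P
  have h2 := congrArg (sOp (i+1)) h1
  simp only [sOp_mul, sOp_sub, sOp_X_left, sOp_X_right,
    sOp_X_ne (i+1) i (by omega) (by omega)] at h2
  have h3 := congrArg (sOp i) h2
  simp only [sOp_mul, sOp_sub, sOp_X_left, sOp_X_right,
    sOp_X_ne i (i+2) (by omega) (by omega)] at h3
  have h4 := rhoOp_spec' (i+1) (rhoOp i P)
  have h5 := congrArg (sOp i) h4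
  simp only [sOp_mul, sOp_sub, sOp_X_left, sOp_X_right, sOp_rhoOp,
    sOp_X_ne i (i+2) (by omega) (by omega)] at h5
  have h6 := rhoOp_spec' i (rhoOp (i+1) (rhoOp i P))
  have k1 := rhoOp_spec' (i+1) P
  have k2 := congrArg (sOp i) k1
  simp only [sOp_mul, sOp_sub, sOp_X_left, sOp_X_right,
    sOp_X_ne i (i+2) (by omega) (by omega)] at k2
  have k3 := congrArg (sOp (i+1)) k2
  simp only [sOp_mul, sOp_sub, sOp_X_left, sOp_X_right,
    sOp_X_ne (i+1) i (by omega) (by omega)] at k3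
  rw [sOp_braid] at k3
  have k4 := rhoOp_spec' i (rhoOp (i+1) P)
  have k5 := congrArg (sOp (i+1)) k4
  simp only [sOp_mul, sOp_sub, sOp_X_left, sOp_X_right, sOp_rhoOp,
    sOp_X_ne (i+1) i (by omega) (by omega)] at k5
  have k6 := rhoOp_spec' (i+1) (rhoOp i (rhoOp (i+1) P))
  apply mul_left_cancel₀ (a := ((X i - X (i+1)) * (X i - X (i+2)) * (X (i+1) - X (i+2)) : Poly)^2)
  · exact pow_ne_zero _ (mul_ne_zero (mul_ne_zero (X_sub_X_ne hab) (X_sub_X_ne hac)) (X_sub_X_ne hbc))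
  · have ha2 : (i + 1) + 1 = i + 2 := by omega
    simp only [ha2] at k1 k5 k6
    set a := (X i : Poly)
    set b := (X (i+1) : Poly)
    set c := (X (i+2) : Poly)
    linear_combination ((a-b)*(a-c)^2*(b-c)^2) * h6
      + (a*(a-b)*(a-c)^2*(b-c)) * h4
      - (b*(a-b)*(a-c)*(b-c)^2) * h5
      + (a*b*(a-b)*(a-c)*(b-c)) * h1
      - (a*c*(a-b)*(a-c)*(b-c)) * h2
      + (b*c*(a-b)*(a-c)*(b-c)) * h3
      - ((a-b)^2*(a-c)^2*(b-c)) * k6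
      - (b*(a-b)*(a-c)^2*(b-c)) * k4
      + (c*(a-b)^2*(a-c)*(b-c)) * k5
      - (a^2*(a-b)*(a-c)*(b-c)) * k1
      + (b^2*(a-b)*(a-c)*(b-c)) * k2
      - (c^2*(a-b)*(a-c)*(b-c)) * k3

/-- The operators `ρ̄_i = ρ_i - 1` satisfy the braid
relation `ρ̄_i ρ̄_{i+1} ρ̄_i = ρ̄_{i+1} ρ̄_i ρ̄_{i+1}` for `1 ≤ i ≤ n - 2`. -/
theorem rhoBarOp_braid (n : ℕ) (i : ℕ) (hi : 1 ≤ i) (hin : i + 2 ≤ n)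
    (P : Poly) (hP : ↑P.vars ⊆ Set.Icc 1 n) :
    rhoBarOp i (rhoBarOp (i + 1) (rhoBarOp i P)) =
      rhoBarOp (i + 1) (rhoBarOp i (rhoBarOp (i + 1) P)) := by
  simp only [rhoBarOp, rhoOp_sub]
  linear_combination rhoOp_braid i P - rhoOp_idem i P + rhoOp_idem (i+1) P

end KeyPoly
end
end
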